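/- arXiv:2512.07579 — 4 statements merged into one kernel-verified Lean document; each statement's English description precedes it below -/
import Mathlib

section
/- Let P(λ) = λ^5 + (5 - n)λ^4 + (9 - 3n - t)λ^3 + (nt - n - t^2 - 2t - 1)λ^2 + (2nt + 4n - 2t^2 - 2t - 16)λ + 4n - 12 with real parameters n ≥ 9 and 3 ≤ t ≤ n - 3. Then P is strictly increasing on the interval [n - 3, ∞). -/
theorem stmt_3 (n t : ℝ) (hn : 9 ≤ n) (ht : 3 ≤ t) (htn : t ≤ n - 3) :
    StrictMonoOn
      (fun x : ℝ => x ^ 5 + (5 - n) * x ^ 4 + (9 - 3 * n - t) * x ^ 3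
        + (n * t - n - t ^ 2 - 2 * t - 1) * x ^ 2
        + (2 * n * t + 4 * n - 2 * t ^ 2 - 2 * t - 16) * x + 4 * n - 12)
      (Set.Ici (n - 3)) := by
  have h := strictMonoOn_of_deriv_pos (convex_Ici (n - 3))
    (f := fun x : ℝ => x ^ 5 + (5 - n) * x ^ 4 + (9 - 3 * n - t) * x ^ 3
        + (n * t - n - t ^ 2 - 2 * t - 1) * x ^ 2
        + (2 * n * t + 4 * n - 2 * t ^ 2 - 2 * t - 16) * x + 4 * n - 12)
    (by fun_prop) ?_
  · exact h
  · intro x hx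
    rw [interior_Ici] at hx
    have hx' : n - 3 < x := hx
    have H : HasDerivAt (fun x : ℝ => x ^ 5 + (5 - n) * x ^ 4 + (9 - 3 * n - t) * x ^ 3
        + (n * t - n - t ^ 2 - 2 * t - 1) * x ^ 2
        + (2 * n * t + 4 * n - 2 * t ^ 2 - 2 * t - 16) * x + 4 * n - 12)
        (5 * x ^ 4 + (5 - n) * (4 * x ^ 3) + (9 - 3 * n - t) * (3 * x ^ 2)
          + (n * t - n - t ^ 2 - 2 * t - 1) * (2 * x)
          + (2 * n * t + 4 * n - 2 * t ^ 2 - 2 * t - 16)) x := by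
      have h5 : HasDerivAt (fun x : ℝ => x ^ 5) (5 * x ^ 4) x := by
        simpa using hasDerivAt_pow 5 x
      have h4 : HasDerivAt (fun x : ℝ => x ^ 4) (4 * x ^ 3) x := by
        simpa using hasDerivAt_pow 4 x
      have h3 : HasDerivAt (fun x : ℝ => x ^ 3) (3 * x ^ 2) x := by
        simpa using hasDerivAt_pow 3 x
      have h2 : HasDerivAt (fun x : ℝ => x ^ 2) (2 * x) x := by
        simpa using hasDerivAt_pow 2 x
      have h1 : HasDerivAt (fun x : ℝ => x) 1 x := hasDerivAt_id x
      have := ((((h5.add (h4.const_mul (5 - n))).add (h3.const_mul (9 - 3 * n - t))).add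
        (h2.const_mul (n * t - n - t ^ 2 - 2 * t - 1))).add
        (h1.const_mul (2 * n * t + 4 * n - 2 * t ^ 2 - 2 * t - 16))).add_const (4 * n)
      have := this.sub_const 12
      exact (this.congr_deriv (by ring)).congr_of_eventuallyEq
        (Filter.Eventually.of_forall fun y => by simp only [Pi.add_apply])
    rw [H.deriv]
    have hxt : t < x := by linarith
    nlinarith [mul_pos (sub_pos.2 hx') (sub_pos.2 hxt), sq_nonneg (x - (n - 3)),
      mul_pos (mul_pos (sub_pos.2 hx') (sub_pos.2 hx')) (sub_pos.2 hxt),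
      mul_nonneg (mul_nonneg (le_of_lt (sub_pos.2 hx')) (le_of_lt (sub_pos.2 hx'))) (sub_nonneg.2 htn),
      
      sq_nonneg (x^2 - (n-3)*x), sq_nonneg (x - t), mul_nonneg (sub_nonneg.2 htn) (by linarith : (0:ℝ) ≤ t - 3),
      mul_nonneg (le_of_lt (sub_pos.2 hx')) (by linarith : (0:ℝ) ≤ t - 3),
      sq_nonneg x, sq_nonneg (x - 3), mul_pos (sub_pos.2 hxt) (sub_pos.2 hxt)]
end

section
/- For integers n ≥ 4 and 3 ≤ t ≤ n, the largest real root λ₁ of g_{n,t}(λ) = λ^3 - (n-3)λ^2 - (n+t-3)λ - t^2 + (n+4)t - n - 7 satisfies n - 2 ≤ λ₁ < n - 1, with equality n - 2 = λ₁ if and only if t = 3. -/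
theorem stmt_11 (n t : ℤ) (hn : 4 ≤ n) (ht : 3 ≤ t) (htn : t ≤ n) (l1 : ℝ)
    (hroot : l1 ^ 3 - ((n : ℝ) - 3) * l1 ^ 2 - ((n : ℝ) + t - 3) * l1 - (t : ℝ) ^ 2
        + ((n : ℝ) + 4) * t - n - 7 = 0)
    (hmax : ∀ x : ℝ, x ^ 3 - ((n : ℝ) - 3) * x ^ 2 - ((n : ℝ) + t - 3) * x - (t : ℝ) ^ 2
        + ((n : ℝ) + 4) * t - n - 7 = 0 → x ≤ l1) :
    (n : ℝ) - 2 ≤ l1 ∧ l1 < (n : ℝ) - 1 ∧ ((n : ℝ) - 2 = l1 ↔ t = 3) := by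
  have hnr : (4 : ℝ) ≤ (n : ℝ) := by exact_mod_cast hn
  have htr : (3 : ℝ) ≤ (t : ℝ) := by exact_mod_cast ht
  have htnr : (t : ℝ) ≤ (n : ℝ) := by exact_mod_cast htn
  set f : ℝ → ℝ := fun x => x ^ 3 - ((n : ℝ) - 3) * x ^ 2 - ((n : ℝ) + t - 3) * x - (t : ℝ) ^ 2
        + ((n : ℝ) + 4) * t - n - 7 with hf
  have hcont : Continuous f := by fun_prop
  -- values at n-2 and n-1
  have hfn2 : f ((n : ℝ) - 2) = -((t : ℝ) - 3) ^ 2 := by simp only [hf]; ring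
  have hfn1 : 0 < f ((n : ℝ) - 1) := by
    have h1 : 0 ≤ ((n : ℝ) - t) * ((n : ℝ) + t - 1) := by nlinarith
    simp only [hf]; nlinarith
  -- l1 < n - 1
  have hlt : l1 < (n : ℝ) - 1 := by
    by_contra h
    push_neg at h
    have hs : 0 ≤ l1 - ((n : ℝ) - 1) := by linarith
    have h1 : 0 ≤ ((n : ℝ) - t) * ((n : ℝ) + t - 1) := by nlinarith
    have hA : 0 ≤ (n : ℝ) ^ 2 + n - t := by nlinarith
    nlinarith [mul_nonneg hs hs, mul_nonneg (mul_nonneg hs hs) hs,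
      mul_nonneg hA hs, mul_nonneg (by linarith : (0:ℝ) ≤ 2 * n) (mul_nonneg hs hs)]
  -- n - 2 ≤ l1 via IVT
  have hle : (n : ℝ) - 2 ≤ l1 := by
    have hmem : (0 : ℝ) ∈ Set.Icc (f ((n : ℝ) - 2)) (f ((n : ℝ) - 1)) := by
      constructor
      · rw [hfn2]; nlinarith [sq_nonneg ((t : ℝ) - 3)]
      · linarith
    have := intermediate_value_Icc (by linarith : (n : ℝ) - 2 ≤ (n : ℝ) - 1)
      hcont.continuousOn hmem
    obtain ⟨c, hc, hfc⟩ := this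
    have := hmax c hfc
    linarith [hc.1]
  refine ⟨hle, hlt, ?_, ?_⟩
  · intro heq
    have hr : f ((n : ℝ) - 2) = 0 := by rw [heq]; exact hroot
    rw [hfn2] at hr
    have : (t : ℝ) = 3 := by nlinarith [sq_nonneg ((t : ℝ) - 3)]
    exact_mod_cast this
  · intro ht3
    subst ht3
    by_contra h
    have hgt : (n : ℝ) - 2 < l1 := lt_of_le_of_ne hle h
    have hs : 0 < l1 - ((n : ℝ) - 2) := by linarith
    have hB : (0:ℝ) < (n : ℝ) ^ 2 - 3 * n - 3 + 3 := by nlinarith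
    push_cast at hroot
    nlinarith [mul_pos hs hs, mul_pos (mul_pos hs hs) hs,
      mul_pos hB hs, mul_pos (by linarith : (0:ℝ) < 2 * n - 3) (mul_pos hs hs)]
end

section
/- For integers n ≥ 6 and 3 ≤ s < t ≤ n, the largest real root of g_{n,s} is strictly less than the largest real root of g_{n,t}, where g_{n,t}(λ) = λ^3 - (n-3)λ^2 - (n+t-3)λ - t^2 + (n+4)t - n - 7; equivalently, λ_max is strictly increasing in t on 3 ≤ t ≤ n. -/
set_option maxHeartbeats 1000000


theorem stmt_16 (n s t : ℤ) (hn : 6 ≤ n) (hs : 3 ≤ s) (hst : s < t) (htn : t ≤ n)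
    (ls lt : ℝ)
    (hs_root : ls ^ 3 - ((n : ℝ) - 3) * ls ^ 2 - ((n : ℝ) + s - 3) * ls - (s : ℝ) ^ 2
        + ((n : ℝ) + 4) * s - n - 7 = 0)
    (hs_max : ∀ x : ℝ, x ^ 3 - ((n : ℝ) - 3) * x ^ 2 - ((n : ℝ) + s - 3) * x - (s : ℝ) ^ 2
        + ((n : ℝ) + 4) * s - n - 7 = 0 → x ≤ ls)
    (ht_root : lt ^ 3 - ((n : ℝ) - 3) * lt ^ 2 - ((n : ℝ) + t - 3) * lt - (t : ℝ) ^ 2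
        + ((n : ℝ) + 4) * t - n - 7 = 0)
    (ht_max : ∀ x : ℝ, x ^ 3 - ((n : ℝ) - 3) * x ^ 2 - ((n : ℝ) + t - 3) * x - (t : ℝ) ^ 2
        + ((n : ℝ) + 4) * t - n - 7 = 0 → x ≤ lt) :
    ls < lt := by
  have hnR : (6:ℝ) ≤ (n:ℝ) := by exact_mod_cast hn
  have hsR : (3:ℝ) ≤ (s:ℝ) := by exact_mod_cast hs
  have hstR : (s:ℝ) + 1 ≤ (t:ℝ) := by exact_mod_cast hst
  have htnR : (t:ℝ) ≤ (n:ℝ) := by exact_mod_cast htn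
  set N := (n:ℝ) with hN
  set S := (s:ℝ) with hS
  set T := (t:ℝ) with hT
  have hconts : Continuous (fun x : ℝ =>
      x ^ 3 - (N - 3) * x ^ 2 - (N + S - 3) * x - S ^ 2 + (N + 4) * S - N - 7) := by
    continuity
  have hcontt : Continuous (fun x : ℝ =>
      x ^ 3 - (N - 3) * x ^ 2 - (N + T - 3) * x - T ^ 2 + (N + 4) * T - N - 7) := by
    continuity
  -- Step 1: ls ≥ N - 2
  have h1 : N - 2 ≤ ls := by
    have hmem : (0:ℝ) ∈ Set.Icc
        ((N-2) ^ 3 - (N - 3) * (N-2) ^ 2 - (N + S - 3) * (N-2) - S ^ 2 + (N + 4) * S - N - 7)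
        (N ^ 3 - (N - 3) * N ^ 2 - (N + S - 3) * N - S ^ 2 + (N + 4) * S - N - 7) := by
      have e1 : (N-2) ^ 3 - (N - 3) * (N-2) ^ 2 - (N + S - 3) * (N-2) - S ^ 2 + (N + 4) * S - N - 7
          = -(S - 3)^2 := by ring
      have e2 : N ^ 3 - (N - 3) * N ^ 2 - (N + S - 3) * N - S ^ 2 + (N + 4) * S - N - 7
          = 2*N^2 + 2*N + 4*S - S^2 - 7 := by ring
      rw [e1, e2]
      constructor
      · nlinarith [sq_nonneg (S - 3)]
      · nlinarith [mul_nonneg (by linarith : (0:ℝ) ≤ N - S) (by linarith : (0:ℝ) ≤ N + S)]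
    obtain ⟨c, hc, hfc⟩ := intermediate_value_Icc (by linarith : N - 2 ≤ N)
      hconts.continuousOn hmem
    have := hs_max c hfc
    have := hc.1
    linarith
  -- Step 2: g_t(ls) < 0
  have hval : ls ^ 3 - (N - 3) * ls ^ 2 - (N + T - 3) * ls - T ^ 2 + (N + 4) * T - N - 7
      = (T - S) * (N + 4 - T - S - ls) := by
    linear_combination hs_root
  have hkey : ls ^ 3 - (N - 3) * ls ^ 2 - (N + T - 3) * ls - T ^ 2 + (N + 4) * T - N - 7 < 0 := by
    rw [hval]
    have h2 : (1:ℝ) ≤ T - S := by linarith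
    have h3 : N + 4 - T - S - ls ≤ -1 := by linarith
    nlinarith
  -- Step 3: ls < N
  have hlsN : ls ≤ N := by
    by_contra h
    push_neg at h
    nlinarith [mul_pos (by linarith : (0:ℝ) < ls) (by linarith : (0:ℝ) < ls - N),
      mul_pos (mul_pos (by linarith : (0:ℝ) < ls) (by linarith : (0:ℝ) < ls - N))
        (by linarith : (0:ℝ) < ls),
      mul_nonneg (by linarith : (0:ℝ) ≤ N - S) (by linarith : (0:ℝ) ≤ N + S),
      mul_pos (by linarith : (0:ℝ) < ls - N) (by linarith : (0:ℝ) < ls - N)]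
  -- Step 4: IVT for g_t on [ls, N]
  have hmem2 : (0:ℝ) ∈ Set.Icc
      (ls ^ 3 - (N - 3) * ls ^ 2 - (N + T - 3) * ls - T ^ 2 + (N + 4) * T - N - 7)
      (N ^ 3 - (N - 3) * N ^ 2 - (N + T - 3) * N - T ^ 2 + (N + 4) * T - N - 7) := by
    have e3 : N ^ 3 - (N - 3) * N ^ 2 - (N + T - 3) * N - T ^ 2 + (N + 4) * T - N - 7
        = 2*N^2 + 2*N + 4*T - T^2 - 7 := by ring
    rw [e3]
    constructor
    · linarith
    · nlinarith [mul_nonneg (by linarith : (0:ℝ) ≤ N - T) (by linarith : (0:ℝ) ≤ N + T)]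
  obtain ⟨c, hc, hfc⟩ := intermediate_value_Icc hlsN hcontt.continuousOn hmem2
  have hcle := ht_max c hfc
  have hne : c ≠ ls := by
    intro h
    rw [h] at hfc
    have hfc2 : ls ^ 3 - (N - 3) * ls ^ 2 - (N + T - 3) * ls - T ^ 2 + (N + 4) * T - N - 7
        = 0 := hfc
    linarith
  have := hc.1
  have : ls < c := lt_of_le_of_ne this (Ne.symm hne)
  linarith
end

section
/- For integers n ≥ 9, if λ₁ > n - 4 is the largest real root of P₂(λ) = λ^4 + (4-n)λ^3 + (8-3n)λ^2 + (3n-10)λ + n - 3, then g_{n,n-2}(λ₁) < 0, where g_{n,n-2}(λ) = λ^3 - (n-3)λ^2 - (2n-5)λ + 2n - 3; consequently the largest root of g_{n,n-2} exceeds λ₁. -/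
theorem stmt_18 (n : ℤ) (hn : 9 ≤ n) (l1 : ℝ) (hl1 : (n : ℝ) - 4 < l1)
    (hroot : l1 ^ 4 + (4 - (n : ℝ)) * l1 ^ 3 + (8 - 3 * (n : ℝ)) * l1 ^ 2
        + (3 * (n : ℝ) - 10) * l1 + n - 3 = 0)
    (hmax : ∀ x : ℝ, x ^ 4 + (4 - (n : ℝ)) * x ^ 3 + (8 - 3 * (n : ℝ)) * x ^ 2
        + (3 * (n : ℝ) - 10) * x + n - 3 = 0 → x ≤ l1) :
    (l1 ^ 3 - ((n : ℝ) - 3) * l1 ^ 2 - (2 * (n : ℝ) - 5) * l1 + 2 * (n : ℝ) - 3 < 0)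
    ∧ ∃ r : ℝ, r ^ 3 - ((n : ℝ) - 3) * r ^ 2 - (2 * (n : ℝ) - 5) * r + 2 * (n : ℝ) - 3 = 0
        ∧ l1 < r := by
  have hn' : (9 : ℝ) ≤ (n : ℝ) := by exact_mod_cast hn
  have hl1pos : (0 : ℝ) < l1 + 1 := by linarith
  have hg : l1 ^ 3 - ((n : ℝ) - 3) * l1 ^ 2 - (2 * (n : ℝ) - 5) * l1 + 2 * (n : ℝ) - 3 < 0 := by
    nlinarith [mul_pos hl1pos hl1pos, sq_nonneg l1]
  refine ⟨hg, ?_⟩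
  set f : ℝ → ℝ := fun x => x ^ 3 - ((n : ℝ) - 3) * x ^ 2 - (2 * (n : ℝ) - 5) * x + 2 * (n : ℝ) - 3 with hf
  have hcont : ContinuousOn f (Set.Icc l1 (max (l1 + 1) (n : ℝ))) := by
    apply Continuous.continuousOn; fun_prop
  set M : ℝ := max (l1 + 1) (n : ℝ) with hM
  have hMl : l1 ≤ M := le_trans (by linarith) (le_max_left _ _)
  have hMn : (n : ℝ) ≤ M := le_max_right _ _
  have hfM : 0 ≤ f M := by
    have : (0:ℝ) < M := by linarith
    simp only [hf]
    nlinarith [mul_nonneg (mul_nonneg this.le this.le) (by linarith : (0:ℝ) ≤ M - (n:ℝ)), sq_nonneg M]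
  have h0 : (0 : ℝ) ∈ Set.Icc (f l1) (f M) := ⟨le_of_lt hg, hfM⟩
  obtain ⟨r, hr, hfr⟩ := intermediate_value_Icc hMl hcont h0
  refine ⟨r, hfr, ?_⟩
  rcases eq_or_lt_of_le hr.1 with h | h
  · exfalso; rw [← h] at hfr; exact absurd hfr (ne_of_lt hg)
  · exact h
end
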